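/- Suppose 0 < ε ≤ 1/9 and 0 < θ ≤ 1/9, and X = (X_k, k ∈ ℤ) is a strictly stationary Markov chain satisfying Condition H(ε,θ). Then for every positive integer n, P(X_0 = 1 and X_n = 1) = (ε/2)(1−θ)^n + P(X_0 = 1 and X_n = −1). -/

import Mathlib

open MeasureTheory ProbabilityTheory Filter Topology

noncomputable section

/-- A sequence `X = (X_k, k ∈ ℤ)` of real random variables is strictly stationary if for
every `n ≥ 1` and `j ∈ ℤ`, `(X_1, …, X_n)` has the same distribution as
`(X_{1+j}, …, X_{n+j})`. -/
def IsStrictlyStationary {Ω : Type*} [MeasurableSpace Ω] (P : Measure Ω)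
    (X : ℤ → Ω → ℝ) : Prop :=
  ∀ (n : ℕ) (j : ℤ),
    Measure.map (fun ω => fun i : Fin n => X (1 + (i : ℤ)) ω) P =
    Measure.map (fun ω => fun i : Fin n => X (1 + j + (i : ℤ)) ω) P

/-- `X` is a Markov chain: for every `n ∈ ℤ` and Borel set `B`,
`P(X_{n+1} ∈ B | σ(X_k, k ≤ n)) = P(X_{n+1} ∈ B | X_n)` almost surely (expressed via
conditional expectations of indicator functions). -/
def IsMarkovChain {Ω : Type*} [MeasurableSpace Ω] (P : Measure Ω)
    (X : ℤ → Ω → ℝ) : Prop :=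
  ∀ (n : ℤ) (B : Set ℝ), MeasurableSet B →
    (P[(fun ω => Set.indicator B (fun _ => (1 : ℝ)) (X (n + 1) ω)) |
        ⨆ k : {k : ℤ // k ≤ n}, MeasurableSpace.comap (X k) inferInstance])
      =ᵐ[P]
    (P[(fun ω => Set.indicator B (fun _ => (1 : ℝ)) (X (n + 1) ω)) |
        MeasurableSpace.comap (X n) inferInstance])

/-- Condition `H(ε,θ)`: `X` is a strictly stationary Markov chain with state space
`{−1,0,1}`, marginal distribution `π^{(ε)}`, and one-step transition probabilities given
by the matrix `ℙ^{(ε,θ)}` (with `θ* := θ/(1−ε)`). Conditional probabilities are expressed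
via `ProbabilityTheory.cond`. -/
def CondH {Ω : Type*} [MeasurableSpace Ω] (P : Measure Ω) (X : ℤ → Ω → ℝ)
    (ε θ : ℝ) : Prop :=
  IsStrictlyStationary P X ∧ IsMarkovChain P X ∧
  (∀ k, Measurable (X k)) ∧
  (∀ k ω, X k ω ∈ ({-1, 0, 1} : Set ℝ)) ∧
  P {ω | X 0 ω = 0} = ENNReal.ofReal (1 - ε) ∧
  P {ω | X 0 ω = -1} = ENNReal.ofReal (ε / 2) ∧
  P {ω | X 0 ω = 1} = ENNReal.ofReal (ε / 2) ∧
  ProbabilityTheory.cond P {ω | X 0 ω = 0} {ω | X 1 ω = 0}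
      = ENNReal.ofReal (1 - (θ / (1 - ε)) * ε) ∧
  ProbabilityTheory.cond P {ω | X 0 ω = 0} {ω | X 1 ω = -1}
      = ENNReal.ofReal ((θ / (1 - ε)) * ε / 2) ∧
  ProbabilityTheory.cond P {ω | X 0 ω = 0} {ω | X 1 ω = 1}
      = ENNReal.ofReal ((θ / (1 - ε)) * ε / 2) ∧
  ProbabilityTheory.cond P {ω | X 0 ω = -1} {ω | X 1 ω = -1}
      = ENNReal.ofReal (1 - θ) ∧
  ProbabilityTheory.cond P {ω | X 0 ω = 1} {ω | X 1 ω = 1}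
      = ENNReal.ofReal (1 - θ) ∧
  ProbabilityTheory.cond P {ω | X 0 ω = -1} {ω | X 1 ω = 0}
      = ENNReal.ofReal θ ∧
  ProbabilityTheory.cond P {ω | X 0 ω = 1} {ω | X 1 ω = 0}
      = ENNReal.ofReal θ ∧
  ProbabilityTheory.cond P {ω | X 0 ω = -1} {ω | X 1 ω = 1} = 0 ∧
  ProbabilityTheory.cond P {ω | X 0 ω = 1} {ω | X 1 ω = -1} = 0

section AuxLemmas

set_option linter.unusedSectionVars false

variable {Ω : Type*} {mΩ : MeasurableSpace Ω} {P : Measure Ω} [IsProbabilityMeasure P]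
  {X : ℤ → Ω → ℝ}

lemma ev_meas' (hm : ∀ k, Measurable (X k)) (k : ℤ) (s : ℝ) :
    MeasurableSet {ω | X k ω = s} := hm k (measurableSet_singleton s)

lemma stat_one'
    (hst : ∀ (n : ℕ) (j : ℤ),
      Measure.map (fun ω => fun i : Fin n => X (1 + (i : ℤ)) ω) P =
      Measure.map (fun ω => fun i : Fin n => X (1 + j + (i : ℤ)) ω) P)
    (hm : ∀ k, Measurable (X k)) (k : ℤ) (s : ℝ) :
    P {ω | X k ω = s} = P {ω | X 0 ω = s} := by
  have key : ∀ j : ℤ, P {ω | X (1 + j) ω = s} = P {ω | X 1 ω = s} := by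
    intro j
    have h := hst 1 j
    have hS : MeasurableSet {f : Fin 1 → ℝ | f 0 = s} := by
      have : {f : Fin 1 → ℝ | f 0 = s} = (fun f : Fin 1 → ℝ => f 0) ⁻¹' {s} := rfl
      rw [this]
      exact measurable_pi_apply (0 : Fin 1) (measurableSet_singleton s)
    have h1 : Measurable fun ω => fun i : Fin 1 => X (1 + (i : ℤ)) ω :=
      measurable_pi_lambda _ fun i => hm _
    have h2 : Measurable fun ω => fun i : Fin 1 => X (1 + j + (i : ℤ)) ω :=
      measurable_pi_lambda _ fun i => hm _
    have h3 := congrArg (fun μ : Measure (Fin 1 → ℝ) => μ {f : Fin 1 → ℝ | f 0 = s}) h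
    simp only [Measure.map_apply h1 hS, Measure.map_apply h2 hS] at h3
    have e1 : (fun ω => fun i : Fin 1 => X (1 + (i : ℤ)) ω) ⁻¹' {f : Fin 1 → ℝ | f 0 = s}
        = {ω | X 1 ω = s} := by
      ext ω; simp [Set.preimage, Set.mem_setOf_eq]
    have e2 : (fun ω => fun i : Fin 1 => X (1 + j + (i : ℤ)) ω) ⁻¹' {f : Fin 1 → ℝ | f 0 = s}
        = {ω | X (1 + j) ω = s} := by
      ext ω; simp [Set.preimage, Set.mem_setOf_eq]
    rw [e1, e2] at h3
    exact h3.symm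
  have h1 := key (k - 1)
  have h2 := key (-1)
  rw [show (1 : ℤ) + (k - 1) = k by ring] at h1
  rw [show (1 : ℤ) + (-1) = 0 by ring] at h2
  exact h1.trans h2.symm

lemma stat_pair'
    (hst : ∀ (n : ℕ) (j : ℤ),
      Measure.map (fun ω => fun i : Fin n => X (1 + (i : ℤ)) ω) P =
      Measure.map (fun ω => fun i : Fin n => X (1 + j + (i : ℤ)) ω) P)
    (hm : ∀ k, Measurable (X k)) (k : ℤ) (s t : ℝ) :
    P {ω | X k ω = s ∧ X (k + 1) ω = t} = P {ω | X 0 ω = s ∧ X 1 ω = t} := by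
  have hS : MeasurableSet {f : Fin 2 → ℝ | f 0 = s ∧ f 1 = t} := by
    have : {f : Fin 2 → ℝ | f 0 = s ∧ f 1 = t}
        = (fun f : Fin 2 → ℝ => f 0) ⁻¹' {s} ∩ (fun f : Fin 2 → ℝ => f 1) ⁻¹' {t} := rfl
    rw [this]
    exact (measurable_pi_apply (0 : Fin 2) (measurableSet_singleton s)).inter
      (measurable_pi_apply (1 : Fin 2) (measurableSet_singleton t))
  have key : ∀ j : ℤ, P {ω | X (1 + j) ω = s ∧ X (1 + j + 1) ω = t}
      = P {ω | X 1 ω = s ∧ X 2 ω = t} := by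
    intro j
    have h := hst 2 j
    have h1 : Measurable fun ω => fun i : Fin 2 => X (1 + (i : ℤ)) ω :=
      measurable_pi_lambda _ fun i => hm _
    have h2 : Measurable fun ω => fun i : Fin 2 => X (1 + j + (i : ℤ)) ω :=
      measurable_pi_lambda _ fun i => hm _
    have h3 := congrArg (fun μ : Measure (Fin 2 → ℝ) => μ {f : Fin 2 → ℝ | f 0 = s ∧ f 1 = t}) h
    simp only [Measure.map_apply h1 hS, Measure.map_apply h2 hS] at h3
    have e1 : (fun ω => fun i : Fin 2 => X (1 + (i : ℤ)) ω) ⁻¹' {f : Fin 2 → ℝ | f 0 = s ∧ f 1 = t}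
        = {ω | X 1 ω = s ∧ X 2 ω = t} := by
      ext ω
      simp only [Set.preimage, Set.mem_setOf_eq]
      norm_num
    have e2 : (fun ω => fun i : Fin 2 => X (1 + j + (i : ℤ)) ω) ⁻¹'
          {f : Fin 2 → ℝ | f 0 = s ∧ f 1 = t}
        = {ω | X (1 + j) ω = s ∧ X (1 + j + 1) ω = t} := by
      ext ω
      simp only [Set.preimage, Set.mem_setOf_eq]
      norm_num
    rw [e1, e2] at h3
    exact h3.symm
  have h1 := key (k - 1)
  have h2 := key (-1)
  rw [show (1 : ℤ) + (k - 1) = k by ring] at h1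
  rw [show (1 : ℤ) + (-1) = 0 by ring] at h2
  rw [show (0 : ℤ) + 1 = 1 by ring] at h2
  exact h1.trans h2.symm

lemma split3' (hm : ∀ k, Measurable (X k)) (hr : ∀ k ω, X k ω ∈ ({-1, 0, 1} : Set ℝ))
    (U : Set Ω) (hU : MeasurableSet U) (k : ℤ) :
    P U = P (U ∩ {ω | X k ω = 1}) + P (U ∩ {ω | X k ω = 0}) + P (U ∩ {ω | X k ω = -1}) := by
  have hdisj1 : Disjoint (U ∩ {ω | X k ω = 1}) (U ∩ {ω | X k ω = 0}) := by
    rw [Set.disjoint_left]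
    rintro ω ⟨-, h1⟩ ⟨-, h2⟩
    have h1' : X k ω = 1 := h1
    have h2' : X k ω = 0 := h2
    rw [h1'] at h2'
    norm_num at h2'
  have hdisj2 : Disjoint ((U ∩ {ω | X k ω = 1}) ∪ (U ∩ {ω | X k ω = 0}))
      (U ∩ {ω | X k ω = -1}) := by
    rw [Set.disjoint_left]
    rintro ω (⟨-, h1⟩ | ⟨-, h1⟩) ⟨-, h2⟩ <;>
      · have h1' : X k ω = _ := h1
        have h2' : X k ω = -1 := h2
        rw [h1'] at h2'
        norm_num at h2'
  have hcov : U = ((U ∩ {ω | X k ω = 1}) ∪ (U ∩ {ω | X k ω = 0})) ∪ (U ∩ {ω | X k ω = -1}) := by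
    ext ω
    constructor
    · intro hω
      rcases hr k ω with h | h | h
      · exact Or.inr ⟨hω, h⟩
      · exact Or.inl (Or.inr ⟨hω, h⟩)
      · exact Or.inl (Or.inl ⟨hω, h⟩)
    · rintro ((⟨h, -⟩ | ⟨h, -⟩) | ⟨h, -⟩) <;> exact h
  have hm1 : MeasurableSet (U ∩ {ω | X k ω = 0}) :=
    hU.inter (hm k (measurableSet_singleton 0))
  have hm2 : MeasurableSet (U ∩ {ω | X k ω = -1}) :=
    hU.inter (hm k (measurableSet_singleton (-1)))
  calc P U = P (((U ∩ {ω | X k ω = 1}) ∪ (U ∩ {ω | X k ω = 0})) ∪ (U ∩ {ω | X k ω = -1})) := by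
        rw [← hcov]
    _ = P ((U ∩ {ω | X k ω = 1}) ∪ (U ∩ {ω | X k ω = 0})) + P (U ∩ {ω | X k ω = -1}) :=
        measure_union hdisj2 hm2
    _ = P (U ∩ {ω | X k ω = 1}) + P (U ∩ {ω | X k ω = 0}) + P (U ∩ {ω | X k ω = -1}) := by
        rw [measure_union hdisj1 hm1]

lemma markov_key' {Ω : Type*} {mΩ : MeasurableSpace Ω} {P : Measure Ω} [IsProbabilityMeasure P]
    {X : ℤ → Ω → ℝ}
    (hmk : ∀ (n : ℤ) (B : Set ℝ), MeasurableSet B →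
      (P[(fun ω => Set.indicator B (fun _ => (1 : ℝ)) (X (n + 1) ω)) |
          ⨆ k : {k : ℤ // k ≤ n}, MeasurableSpace.comap (X k) inferInstance])
        =ᵐ[P]
      (P[(fun ω => Set.indicator B (fun _ => (1 : ℝ)) (X (n + 1) ω)) |
          MeasurableSpace.comap (X n) inferInstance]))
    (hm : ∀ k, Measurable (X k)) (n : ℕ) (s t : ℝ) :
    P (({ω | X 0 ω = 1} ∩ {ω | X (n : ℤ) ω = s}) ∩ {ω | X ((n : ℤ) + 1) ω = t})
        * P {ω | X (n : ℤ) ω = s}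
      = P ({ω | X 0 ω = 1} ∩ {ω | X (n : ℤ) ω = s})
        * P ({ω | X (n : ℤ) ω = s} ∩ {ω | X ((n : ℤ) + 1) ω = t}) := by
  classical
  set A : Set Ω := {ω | X 0 ω = 1} ∩ {ω | X (n : ℤ) ω = s} with hA
  set A' : Set Ω := {ω | X (n : ℤ) ω = s} with hA'
  have hTeq : {ω | X ((n : ℤ) + 1) ω = t} = X ((n : ℤ) + 1) ⁻¹' {t} := rfl
  set T : Set Ω := X ((n : ℤ) + 1) ⁻¹' {t} with hT
  rw [hTeq]
  have hTm : MeasurableSet T := hm _ (measurableSet_singleton t)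
  have hle2 : MeasurableSpace.comap (X (n : ℤ)) inferInstance ≤ mΩ := (hm _).comap_le
  have hlesup : (⨆ k : {k : ℤ // k ≤ (n : ℤ)}, MeasurableSpace.comap (X k) inferInstance) ≤ mΩ :=
    iSup_le fun k => (hm _).comap_le
  set f : Ω → ℝ := fun ω => Set.indicator {t} (fun _ => (1 : ℝ)) (X ((n : ℤ) + 1) ω) with hf
  have hf_eq : f = Set.indicator T (fun _ => (1 : ℝ)) := by
    funext ω
    by_cases h : X ((n : ℤ) + 1) ω = t
    · simp [hf, hT, Set.indicator, h]
    · simp [hf, hT, Set.indicator, h]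
  have hf_int : Integrable f P := by
    rw [hf_eq]; exact (integrable_const (1 : ℝ)).indicator hTm
  have hmar : (P[f | ⨆ k : {k : ℤ // k ≤ (n : ℤ)}, MeasurableSpace.comap (X k) inferInstance])
      =ᵐ[P] (P[f | MeasurableSpace.comap (X (n : ℤ)) inferInstance]) :=
    hmk (n : ℤ) {t} (measurableSet_singleton t)
  set g : Ω → ℝ := P[f | MeasurableSpace.comap (X (n : ℤ)) inferInstance] with hg
  have hconst : ∀ x y, X (n : ℤ) x = X (n : ℤ) y → g x = g y := by
    intro x y hxy
    have hmeas : Measurable[MeasurableSpace.comap (X (n : ℤ)) inferInstance] g :=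
      stronglyMeasurable_condExp.measurable
    obtain ⟨B, -, hB⟩ :=
      MeasurableSpace.measurableSet_comap.mp (hmeas (measurableSet_singleton (g x)))
    have hx : x ∈ X (n : ℤ) ⁻¹' B := by
      rw [hB]; exact rfl
    have hy : y ∈ X (n : ℤ) ⁻¹' B := by
      simpa [Set.mem_preimage, ← hxy] using hx
    rw [hB] at hy
    exact hy.symm
  rcases Set.eq_empty_or_nonempty A' with he | ⟨ω₀, hω₀⟩
  · have hA'0 : P A' = 0 := by rw [he]; simp
    have hA0 : P A = 0 := measure_mono_null (hA ▸ Set.inter_subset_right) hA'0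
    rw [hA0, hA'0]
    simp
  · set c : ℝ := g ω₀ with hc
    have hcon : ∀ x ∈ A', g x = c := fun x hx => hconst x ω₀ (by
      have hx' : X (n : ℤ) x = s := hx
      have h0' : X (n : ℤ) ω₀ = s := hω₀
      rw [hx', h0'])
    have hAm : MeasurableSet A :=
      ((hm 0) (measurableSet_singleton 1)).inter ((hm _) (measurableSet_singleton s))
    have hA'm : MeasurableSet A' := (hm _) (measurableSet_singleton s)
    have hA'_m2 : MeasurableSet[MeasurableSpace.comap (X (n : ℤ)) inferInstance] A' :=
      ⟨{s}, measurableSet_singleton s, rfl⟩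
    have hA_sup : MeasurableSet[⨆ k : {k : ℤ // k ≤ (n : ℤ)},
        MeasurableSpace.comap (X k) inferInstance] A := by
      have h0 : MeasurableSet[⨆ k : {k : ℤ // k ≤ (n : ℤ)},
          MeasurableSpace.comap (X k) inferInstance] {ω | X 0 ω = 1} :=
        (le_iSup (fun k : {k : ℤ // k ≤ (n : ℤ)} =>
          MeasurableSpace.comap (X k) inferInstance) ⟨0, Int.natCast_nonneg n⟩) _
          ⟨{1}, measurableSet_singleton 1, rfl⟩
      have hn : MeasurableSet[⨆ k : {k : ℤ // k ≤ (n : ℤ)},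
          MeasurableSpace.comap (X k) inferInstance] A' :=
        (le_iSup (fun k : {k : ℤ // k ≤ (n : ℤ)} =>
          MeasurableSpace.comap (X k) inferInstance) ⟨(n : ℤ), le_refl _⟩) _
          ⟨{s}, measurableSet_singleton s, rfl⟩
      exact MeasurableSet.inter h0 hn
    have I1 : ∫ x in A, f x ∂P = (P (A ∩ T)).toReal := by
      rw [hf_eq, setIntegral_indicator hTm, setIntegral_const, smul_eq_mul, mul_one]; rfl
    have I2 : ∫ x in A, f x ∂P = (P A).toReal * c := by
      have e1 : ∫ x in A, f x ∂P = ∫ x in A,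
          (P[f | ⨆ k : {k : ℤ // k ≤ (n : ℤ)}, MeasurableSpace.comap (X k) inferInstance]) x ∂P :=
        (setIntegral_condExp hlesup hf_int hA_sup).symm
      have e2 : ∫ x in A,
          (P[f | ⨆ k : {k : ℤ // k ≤ (n : ℤ)}, MeasurableSpace.comap (X k) inferInstance]) x ∂P
          = ∫ x in A, g x ∂P :=
        integral_congr_ae (ae_restrict_of_ae hmar)
      have e3 : ∫ x in A, g x ∂P = ∫ x in A, c ∂P :=
        setIntegral_congr_fun hAm (fun x hx => hcon x hx.2)
      rw [e1, e2, e3, setIntegral_const, smul_eq_mul]; rfl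
    have I3 : ∫ x in A', f x ∂P = (P (A' ∩ T)).toReal := by
      rw [hf_eq, setIntegral_indicator hTm, setIntegral_const, smul_eq_mul, mul_one]; rfl
    have I4 : ∫ x in A', f x ∂P = (P A').toReal * c := by
      have e1 : ∫ x in A', f x ∂P = ∫ x in A', g x ∂P :=
        (setIntegral_condExp hle2 hf_int hA'_m2).symm
      have e3 : ∫ x in A', g x ∂P = ∫ x in A', c ∂P :=
        setIntegral_congr_fun hA'm (fun x hx => hcon x hx)
      rw [e1, e3, setIntegral_const, smul_eq_mul]; rfl
    have key1 : (P (A ∩ T)).toReal = (P A).toReal * c := by rw [← I1, I2]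
    have key2 : (P (A' ∩ T)).toReal = (P A').toReal * c := by rw [← I3, I4]
    have hfin : ∀ S : Set Ω, P S ≠ ⊤ := fun S => measure_ne_top P S
    have h5 : (P (A ∩ T) * P A').toReal = (P A * P (A' ∩ T)).toReal := by
      rw [ENNReal.toReal_mul, ENNReal.toReal_mul, key1, key2]; ring
    exact (ENNReal.toReal_eq_toReal_iff' (ENNReal.mul_ne_top (hfin _) (hfin _))
      (ENNReal.mul_ne_top (hfin _) (hfin _))).mp h5

lemma step_one' {Ω : Type*} {mΩ : MeasurableSpace Ω} {P : Measure Ω} [IsProbabilityMeasure P]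
    {X : ℤ → Ω → ℝ}
    (hst : ∀ (n : ℕ) (j : ℤ),
      Measure.map (fun ω => fun i : Fin n => X (1 + (i : ℤ)) ω) P =
      Measure.map (fun ω => fun i : Fin n => X (1 + j + (i : ℤ)) ω) P)
    (hmk : ∀ (n : ℤ) (B : Set ℝ), MeasurableSet B →
      (P[(fun ω => Set.indicator B (fun _ => (1 : ℝ)) (X (n + 1) ω)) |
          ⨆ k : {k : ℤ // k ≤ n}, MeasurableSpace.comap (X k) inferInstance])
        =ᵐ[P]
      (P[(fun ω => Set.indicator B (fun _ => (1 : ℝ)) (X (n + 1) ω)) |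
          MeasurableSpace.comap (X n) inferInstance]))
    (hm : ∀ k, Measurable (X k)) (n : ℕ) (s t : ℝ)
    (hs0 : P {ω | X 0 ω = s} ≠ 0) :
    P (({ω | X 0 ω = 1} ∩ {ω | X (n : ℤ) ω = s}) ∩ {ω | X ((n : ℤ) + 1) ω = t})
      = P ({ω | X 0 ω = 1} ∩ {ω | X (n : ℤ) ω = s})
        * ProbabilityTheory.cond P {ω | X 0 ω = s} {ω | X 1 ω = t} := by
  have hkey := markov_key' hmk hm n s t
  have hs1 : P {ω | X (n : ℤ) ω = s} = P {ω | X 0 ω = s} := stat_one' hst hm _ s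
  have hp : P ({ω | X (n : ℤ) ω = s} ∩ {ω | X ((n : ℤ) + 1) ω = t})
      = P ({ω | X 0 ω = s} ∩ {ω | X 1 ω = t}) := by
    rw [← Set.setOf_and, ← Set.setOf_and]
    exact stat_pair' hst hm (n : ℤ) s t
  have hfin : P {ω | X 0 ω = s} ≠ ⊤ := measure_ne_top P _
  have hcond : P ({ω | X 0 ω = s} ∩ {ω | X 1 ω = t})
      = P {ω | X 0 ω = s} * ProbabilityTheory.cond P {ω | X 0 ω = s} {ω | X 1 ω = t} := by
    rw [ProbabilityTheory.cond_apply (ev_meas' hm 0 s), ← mul_assoc,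
      ENNReal.mul_inv_cancel hs0 hfin, one_mul]
  rw [hs1, hp, hcond] at hkey
  have hkey2 : P (({ω | X 0 ω = 1} ∩ {ω | X (n : ℤ) ω = s}) ∩ {ω | X ((n : ℤ) + 1) ω = t})
        * P {ω | X 0 ω = s}
      = (P ({ω | X 0 ω = 1} ∩ {ω | X (n : ℤ) ω = s})
        * ProbabilityTheory.cond P {ω | X 0 ω = s} {ω | X 1 ω = t}) * P {ω | X 0 ω = s} := by
    rw [hkey]; ring
  exact (ENNReal.mul_left_inj hs0 hfin).mp hkey2

end AuxLemmas

/-- Lemma 5.3(7) of the paper: under Condition `H(ε,θ)`, for every `n ≥ 1`,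
`P(X_0 = 1, X_n = 1) = (ε/2)(1−θ)^n + P(X_0 = 1, X_n = −1)`. -/
theorem stmt8 {Ω : Type*} [MeasurableSpace Ω] (P : Measure Ω) [IsProbabilityMeasure P]
    (ε θ : ℝ) (hε : 0 < ε ∧ ε ≤ 1 / 9) (hθ : 0 < θ ∧ θ ≤ 1 / 9)
    (X : ℤ → Ω → ℝ) (hX : CondH P X ε θ) :
    ∀ n : ℕ, 0 < n →
      P {ω | X 0 ω = 1 ∧ X (n : ℤ) ω = 1} =
        ENNReal.ofReal ((ε / 2) * (1 - θ) ^ n) +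
          P {ω | X 0 ω = 1 ∧ X (n : ℤ) ω = -1} := by
  obtain ⟨hst, hmk, hm, hr, hmar0, hmarneg, hmar1, c00, c0n, c01, cnn, c11, cn0, c10, cn1, c1n⟩ := hX
  obtain ⟨hε1, hε2⟩ := hε
  obtain ⟨hθ1, hθ2⟩ := hθ
  have hP1ne : P {ω | X 0 ω = 1} ≠ 0 := by
    rw [hmar1, Ne, ENNReal.ofReal_eq_zero]; push_neg; linarith
  have hP0ne : P {ω | X 0 ω = 0} ≠ 0 := by
    rw [hmar0, Ne, ENNReal.ofReal_eq_zero]; push_neg; linarith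
  have hPnne : P {ω | X 0 ω = -1} ≠ 0 := by
    rw [hmarneg, Ne, ENNReal.ofReal_eq_zero]; push_neg; linarith
  have main : ∀ n : ℕ,
      P {ω | X 0 ω = 1 ∧ X (n : ℤ) ω = 1}
        = ENNReal.ofReal ((ε / 2) * (1 - θ) ^ n) + P {ω | X 0 ω = 1 ∧ X (n : ℤ) ω = -1} := by
    intro n
    induction n with
    | zero =>
      simp only [Nat.cast_zero, pow_zero, mul_one]
      have e1 : {ω | X 0 ω = 1 ∧ X (0 : ℤ) ω = 1} = {ω | X 0 ω = 1} := by
        simp only [and_self]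
      have e2 : {ω | X 0 ω = 1 ∧ X (0 : ℤ) ω = -1} = (∅ : Set Ω) := by
        ext ω
        simp only [Set.mem_setOf_eq, Set.mem_empty_iff_false, iff_false, not_and]
        intro h1 h2
        rw [h1] at h2
        norm_num at h2
      rw [e1, e2, hmar1, measure_empty, add_zero]
    | succ n ih =>
      simp only [Nat.cast_add, Nat.cast_one, Set.setOf_and] at *
      have hsplit : ∀ t : ℝ, P ({ω | X 0 ω = 1} ∩ {ω | X ((n : ℤ) + 1) ω = t})
          = P ({ω | X 0 ω = 1} ∩ {ω | X (n : ℤ) ω = 1})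
              * ProbabilityTheory.cond P {ω | X 0 ω = 1} {ω | X 1 ω = t}
            + P ({ω | X 0 ω = 1} ∩ {ω | X (n : ℤ) ω = 0})
              * ProbabilityTheory.cond P {ω | X 0 ω = 0} {ω | X 1 ω = t}
            + P ({ω | X 0 ω = 1} ∩ {ω | X (n : ℤ) ω = -1})
              * ProbabilityTheory.cond P {ω | X 0 ω = -1} {ω | X 1 ω = t} := by
        intro t
        have hU : MeasurableSet ({ω | X 0 ω = 1} ∩ {ω | X ((n : ℤ) + 1) ω = t}) :=
          (ev_meas' hm 0 1).inter (ev_meas' hm _ t)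
        have e1 : ({ω | X 0 ω = 1} ∩ {ω | X ((n : ℤ) + 1) ω = t}) ∩ {ω | X (n : ℤ) ω = 1}
            = ({ω | X 0 ω = 1} ∩ {ω | X (n : ℤ) ω = 1}) ∩ {ω | X ((n : ℤ) + 1) ω = t} :=
          Set.inter_right_comm _ _ _
        have e2 : ({ω | X 0 ω = 1} ∩ {ω | X ((n : ℤ) + 1) ω = t}) ∩ {ω | X (n : ℤ) ω = 0}
            = ({ω | X 0 ω = 1} ∩ {ω | X (n : ℤ) ω = 0}) ∩ {ω | X ((n : ℤ) + 1) ω = t} :=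
          Set.inter_right_comm _ _ _
        have e3 : ({ω | X 0 ω = 1} ∩ {ω | X ((n : ℤ) + 1) ω = t}) ∩ {ω | X (n : ℤ) ω = -1}
            = ({ω | X 0 ω = 1} ∩ {ω | X (n : ℤ) ω = -1}) ∩ {ω | X ((n : ℤ) + 1) ω = t} :=
          Set.inter_right_comm _ _ _
        rw [split3' hm hr _ hU (n : ℤ), e1, e2, e3,
          step_one' hst hmk hm n 1 t hP1ne,
          step_one' hst hmk hm n 0 t hP0ne,
          step_one' hst hmk hm n (-1) t hPnne]
      have hD := hsplit 1
      have hE := hsplit (-1)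
      rw [c11, c01, cn1] at hD
      rw [c1n, c0n, cnn] at hE
      rw [hD, hE, ih]
      have hofr : ENNReal.ofReal ((ε / 2) * (1 - θ) ^ (n + 1))
          = ENNReal.ofReal ((ε / 2) * (1 - θ) ^ n) * ENNReal.ofReal (1 - θ) := by
        rw [← ENNReal.ofReal_mul (mul_nonneg (by linarith) (pow_nonneg (by linarith) n))]
        congr 1
        rw [pow_succ]
        ring
      rw [hofr]
      ring
  intro n _
  exact main n
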